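/- Let p > 1 be real, N > 0 real, and k ≥ 0 an integer; set D = pᵏ·N. Define γ₀ = 1 and γₙ = ∏_{i=0}^{n−1} (pⁱ + N)/(pⁱ + pᵏN) for n ≥ 1. Then there exists a probability measure μ supported in [0,1] such that γₙ = ∫ tⁿ dμ(t) for all n ∈ ℕ; moreover μ can be taken finitely atomic. (That is, the geometrically regular weighted shift with weights αₙ = √((pⁿ + N)/(pⁿ + pᵏN)) on the special line D = pᵏN — including the extension of this line outside the magic square, i.e., for N ≥ 1 — is subnormal with finitely atomic Berger measure.) -/

import Mathlib

open MeasureTheory Polynomial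
open scoped ENNReal

private lemma grws_integrable_dirac {f : ℝ → ℝ} (hf : Measurable f) (a : ℝ) :
    Integrable f (Measure.dirac a) := by
  refine ⟨hf.aestronglyMeasurable, ?_⟩
  simp only [HasFiniteIntegral, lintegral_dirac]
  exact ENNReal.coe_lt_top

private lemma grws_coeff_prod_nonneg {s : Finset ℕ} {f : ℕ → ℝ[X]}
    (h : ∀ j ∈ s, ∀ m, 0 ≤ (f j).coeff m) :
    ∀ m, 0 ≤ (∏ j ∈ s, f j).coeff m := by
  refine Finset.prod_induction f (fun q => ∀ m, 0 ≤ q.coeff m) ?_ ?_ h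
  · intro q r hq hr m
    rw [Polynomial.coeff_mul]
    exact Finset.sum_nonneg fun x _ => mul_nonneg (hq x.1) (hr x.2)
  · intro m
    rw [Polynomial.coeff_one]
    positivity

/-- The key telescoping product identity. -/
private lemma grws_key (p N : ℝ) (k : ℕ) : ∀ n : ℕ,
    p ^ (n * k) * (∏ i ∈ Finset.range n, (p ^ i + N)) *
        (∏ j ∈ Finset.range k, (p ^ j + p ^ k * N))
      = (∏ i ∈ Finset.range n, (p ^ i + p ^ k * N)) *
        (∏ j ∈ Finset.range k, (p ^ (n + j) + p ^ k * N)) := by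
  intro n
  induction n with
  | zero => simp
  | succ n ih =>
    have step : (∏ j ∈ Finset.range k, (p ^ (n + j) + p ^ k * N)) * (p ^ (n + k) + p ^ k * N)
        = (p ^ n + p ^ k * N) * ∏ j ∈ Finset.range k, (p ^ (n + 1 + j) + p ^ k * N) := by
      rw [← Finset.prod_range_succ (fun j => p ^ (n + j) + p ^ k * N) k,
        Finset.prod_range_succ' (fun j => p ^ (n + j) + p ^ k * N) k]
      rw [Finset.prod_congr rfl (fun j _ => by rw [show n + (j + 1) = n + 1 + j by omega])]
      ring
    rw [Finset.prod_range_succ (fun i => p ^ i + N) n,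
      Finset.prod_range_succ (fun i => p ^ i + p ^ k * N) n]
    linear_combination (p ^ (n + k) + p ^ k * N) * ih
      + (∏ i ∈ Finset.range n, (p ^ i + p ^ k * N)) * step

/-- Let `p > 1`, `N > 0`, `k ≥ 0`, and `D = pᵏN`.  Then the moments
`γₙ = ∏_{i=0}^{n−1} (pⁱ + N)/(pⁱ + pᵏN)` come from a probability measure supported in
`[0,1]` which can be taken finitely atomic (a finite nonnegative combination of Dirac
point masses).  That is, the geometrically regular weighted shift on the special line
`D = pᵏN` — including its extension outside the magic square — is subnormal with finitely
atomic Berger measure. -/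
theorem grws_special_line_subnormal_finitely_atomic (p N : ℝ) (k : ℕ)
    (hp : 1 < p) (hN : 0 < N) :
    ∃ μ : Measure ℝ, IsProbabilityMeasure μ ∧ μ (Set.Icc (0 : ℝ) 1)ᶜ = 0 ∧
      (∀ n : ℕ, ∫ t, t ^ n ∂μ =
        ∏ i ∈ Finset.range n, (p ^ i + N) / (p ^ i + p ^ k * N)) ∧
      ∃ (F : Finset ℝ) (c : ℝ → ℝ≥0∞),
        μ = ∑ x ∈ F, c x • Measure.dirac x := by
  have hp0 : (0 : ℝ) < p := lt_trans one_pos hp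
  have hc : (0 : ℝ) < p ^ k * N := by positivity
  have hden : ∀ j : ℕ, (0 : ℝ) < p ^ j + p ^ k * N := fun j => by positivity
  -- the polynomial whose coefficients give the atomic weights
  set Q : ℝ[X] := ∏ j ∈ Finset.range k,
    (C (p ^ j / (p ^ j + p ^ k * N)) + C (p ^ k * N / (p ^ j + p ^ k * N)) * X) with hQ
  have hcoeff : ∀ m, 0 ≤ Q.coeff m := by
    refine grws_coeff_prod_nonneg fun j _ m => ?_
    have h1 : (0 : ℝ) ≤ p ^ j / (p ^ j + p ^ k * N) := by positivity
    have h2 : (0 : ℝ) ≤ p ^ k * N / (p ^ j + p ^ k * N) := by positivity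
    simp only [coeff_add, coeff_C, coeff_C_mul, coeff_X]
    split_ifs <;> simp_all <;> linarith
  have hdeg : Q.natDegree < k + 1 := by
    have := Polynomial.natDegree_prod_le (Finset.range k)
      (fun j => C (p ^ j / (p ^ j + p ^ k * N)) + C (p ^ k * N / (p ^ j + p ^ k * N)) * X)
    refine lt_of_le_of_lt (le_trans this ?_) (Nat.lt_succ_self k)
    calc ∑ j ∈ Finset.range k,
        (C (p ^ j / (p ^ j + p ^ k * N)) + C (p ^ k * N / (p ^ j + p ^ k * N)) * X).natDegree
        ≤ ∑ _j ∈ Finset.range k, 1 := by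
          refine Finset.sum_le_sum fun j _ => ?_
          refine le_trans (Polynomial.natDegree_add_le _ _) ?_
          simp only [natDegree_C, max_le_iff]
          exact ⟨Nat.zero_le 1, le_trans (Polynomial.natDegree_mul_le)
            (by simp [natDegree_C, natDegree_X])⟩
      _ = k := by simp
  -- evaluation of Q
  have hevalQ : ∀ x : ℝ, Q.eval x
      = ∏ j ∈ Finset.range k, (p ^ j + p ^ k * N * x) / (p ^ j + p ^ k * N) := by
    intro x
    rw [hQ, Polynomial.eval_prod]
    refine Finset.prod_congr rfl fun j _ => ?_
    simp only [eval_add, eval_mul, eval_C, eval_X]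
    field_simp
  have heval1 : Q.eval 1 = 1 := by
    rw [hevalQ]
    refine Finset.prod_eq_one fun j _ => ?_
    rw [mul_one, div_self (ne_of_gt (hden j))]
  -- the moments equal the evaluations of Q at p⁻ⁿ
  have hmoment : ∀ n : ℕ, Q.eval ((p⁻¹) ^ n)
      = ∏ i ∈ Finset.range n, (p ^ i + N) / (p ^ i + p ^ k * N) := by
    intro n
    have key := grws_key p N k n
    have hq : (p : ℝ) ^ (n * k) ≠ 0 := by positivity
    have hBne : (∏ i ∈ Finset.range n, (p ^ i + p ^ k * N)) ≠ 0 :=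
      ne_of_gt (Finset.prod_pos fun i _ => hden i)
    have hC0ne : (∏ j ∈ Finset.range k, (p ^ j + p ^ k * N)) ≠ 0 :=
      ne_of_gt (Finset.prod_pos fun j _ => hden j)
    have hfac : ∀ j ∈ Finset.range k, (p ^ j + p ^ k * N * (p⁻¹) ^ n)
        = (p⁻¹) ^ n * (p ^ (n + j) + p ^ k * N) := by
      intro j _
      rw [pow_add]
      field_simp
      have hpn : p ^ n * p⁻¹ ^ n = 1 := by rw [← mul_pow, mul_inv_cancel₀ hp0.ne', one_pow]
      linear_combination (-(p ^ j)) * hpn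
    have hnum : ∏ j ∈ Finset.range k, (p ^ j + p ^ k * N * (p⁻¹) ^ n)
        = ((p⁻¹) ^ n) ^ k * ∏ j ∈ Finset.range k, (p ^ (n + j) + p ^ k * N) := by
      rw [Finset.prod_congr rfl hfac, Finset.prod_mul_distrib, Finset.prod_const, Finset.card_range]
    rw [hevalQ, Finset.prod_div_distrib, Finset.prod_div_distrib, hnum,
      ← pow_mul, inv_pow, div_eq_div_iff hC0ne hBne, inv_mul_eq_div,
      div_mul_eq_mul_div, div_eq_iff hq]
    linear_combination (-1 : ℝ) * key
  -- the atoms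
  set g : ℕ → ℝ := fun m => (p⁻¹) ^ m with hg
  have hginj : Function.Injective g := by
    have : StrictAnti g := fun a b hab =>
      pow_lt_pow_right_of_lt_one₀ (by positivity) (inv_lt_one_of_one_lt₀ hp) hab
    exact this.injective
  have hgmem : ∀ m : ℕ, g m ∈ Set.Icc (0 : ℝ) 1 := by
    intro m
    constructor
    · positivity
    · exact pow_le_one₀ (by positivity) (le_of_lt (inv_lt_one_of_one_lt₀ hp))
  -- the measure
  set μ : Measure ℝ := ∑ m ∈ Finset.range (k + 1),
    ENNReal.ofReal (Q.coeff m) • Measure.dirac (g m) with hμ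
  have hsum1 : ∑ m ∈ Finset.range (k + 1), Q.coeff m = 1 := by
    have := Polynomial.eval_eq_sum_range' hdeg (1 : ℝ)
    simpa [heval1] using this.symm
  have happly : ∀ s : Set ℝ, MeasurableSet s →
      μ s = ∑ m ∈ Finset.range (k + 1), ENNReal.ofReal (Q.coeff m) * Measure.dirac (g m) s := by
    intro s hs
    rw [hμ, Measure.finset_sum_apply]
    exact Finset.sum_congr rfl fun m _ => rfl
  refine ⟨μ, ?_, ?_, ?_, ?_⟩
  · -- probability measure
    constructor
    rw [happly _ MeasurableSet.univ]
    have : ∀ m ∈ Finset.range (k + 1),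
        ENNReal.ofReal (Q.coeff m) * Measure.dirac (g m) Set.univ
          = ENNReal.ofReal (Q.coeff m) := by
      intro m _; simp
    rw [Finset.sum_congr rfl this, ← ENNReal.ofReal_sum_of_nonneg fun m _ => hcoeff m,
      hsum1, ENNReal.ofReal_one]
  · -- support in [0,1]
    rw [happly _ measurableSet_Icc.compl]
    refine Finset.sum_eq_zero fun m _ => ?_
    rw [Measure.dirac_apply' _ measurableSet_Icc.compl]
    rw [Set.indicator_of_notMem (by simpa using hgmem m)]
    simp
  · -- moments
    intro n
    have hfm : Measurable fun t : ℝ => t ^ n := by fun_prop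
    rw [hμ, integral_finset_sum_measure (fun m _ =>
      (grws_integrable_dirac hfm (g m)).smul_measure ENNReal.ofReal_ne_top)]
    have : ∀ m ∈ Finset.range (k + 1),
        ∫ t, t ^ n ∂(ENNReal.ofReal (Q.coeff m) • Measure.dirac (g m))
          = Q.coeff m * ((p⁻¹) ^ n) ^ m := by
      intro m _
      rw [integral_smul_measure, integral_dirac (fun t : ℝ => t ^ n) (g m)]
      rw [ENNReal.toReal_ofReal (hcoeff m)]
      simp only [smul_eq_mul, hg]
      rw [← pow_mul, ← pow_mul, Nat.mul_comm]
    rw [Finset.sum_congr rfl this, ← Polynomial.eval_eq_sum_range' hdeg ((p⁻¹) ^ n),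
      hmoment n]
  · -- finitely atomic
    refine ⟨(Finset.range (k + 1)).image g,
      fun x => ∑ m ∈ Finset.range (k + 1),
        if g m = x then ENNReal.ofReal (Q.coeff m) else 0, ?_⟩
    rw [Finset.sum_image (fun a _ b _ h => hginj h)]
    refine Finset.sum_congr rfl fun m hm => ?_
    show _ = (∑ m' ∈ Finset.range (k + 1),
        if g m' = g m then ENNReal.ofReal (Q.coeff m') else 0) • Measure.dirac (g m)
    rw [Finset.sum_eq_single m (fun m' _ hne => if_neg fun h => hne (hginj h))
      (fun h => absurd hm h), if_pos rfl]
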